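/- For an affine involution z ∈ Ĩ_n, the set of visible descents of z equals the set of right descents of α_min(z), and the involution code of z equals the code of α_min(z); i.e., for all i, s_i ∈ Des_V(z) iff ℓ(α_min(z) s_i) < ℓ(α_min(z)), and ĉ(z) = c(α_min(z)). -/

import Mathlib

open scoped TensorProduct

/-- Membership in the affine symmetric group `S̃_n`, viewed inside `Equiv.Perm ℤ`. -/
def IsAffine (n : ℕ) (π : Equiv.Perm ℤ) : Prop :=
  (∀ i : ℤ, π (i + n) = π i + n) ∧
  (∑ i ∈ Finset.Icc (1 : ℤ) (n : ℤ), π i) = ∑ i ∈ Finset.Icc (1 : ℤ) (n : ℤ), i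

/-- The underlying function of the affine reflection `t_{ij}`. -/
def affTFun (n : ℕ) (i j k : ℤ) : ℤ :=
  if (k - i) % (n : ℤ) = 0 then k - i + j
  else if (k - j) % (n : ℤ) = 0 then k - j + i
  else k

theorem affTFun_involutive {n : ℕ} {i j : ℤ} (h : ¬ (j - i) % (n : ℤ) = 0) :
    Function.Involutive (affTFun n i j) := by
  have key : ∀ a : ℤ, a % (n : ℤ) = 0 ↔ (n : ℤ) ∣ a :=
    fun a => (@Int.dvd_iff_emod_eq_zero (n : ℤ) a).symm
  rw [key] at h
  intro k
  by_cases h1 : (n : ℤ) ∣ (k - i)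
  · have h2 : ¬ (n : ℤ) ∣ (k - i + j - i) := by
      intro hd
      apply h
      have h5 : j - i = (k - i + j - i) - (k - i) := by ring
      rw [h5]
      exact dvd_sub hd h1
    have h3 : (n : ℤ) ∣ (k - i + j - j) := by
      have h5 : k - i + j - j = k - i := by ring
      rw [h5]; exact h1
    have e1 : affTFun n i j k = k - i + j := by simp [affTFun, key, h1]
    have e2 : affTFun n i j (k - i + j) = k := by
      simp only [affTFun, key]
      rw [if_neg h2, if_pos h3]
      ring
    rw [e1, e2]
  · by_cases h2 : (n : ℤ) ∣ (k - j)
    · have h3 : (n : ℤ) ∣ (k - j + i - i) := by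
        have h5 : k - j + i - i = k - j := by ring
        rw [h5]; exact h2
      have e1 : affTFun n i j k = k - j + i := by simp [affTFun, key, h1, h2]
      have e2 : affTFun n i j (k - j + i) = k := by
        simp only [affTFun, key]
        rw [if_pos h3]
        ring
      rw [e1, e2]
    · have e1 : affTFun n i j k = k := by simp [affTFun, key, h1, h2]
      rw [e1, e1]

/-- The affine reflection `t_{ij}` (interpreted as the identity when `i ≡ j (mod n)`). -/
noncomputable def affT (n : ℕ) (i j : ℤ) : Equiv.Perm ℤ :=
  if h : (j - i) % (n : ℤ) = 0 then 1
  else Function.Involutive.toPerm _ (affTFun_involutive h)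

/-- The simple reflection `s_i = t_{i,i+1}` of `S̃_n`. -/
noncomputable def affS (n : ℕ) (i : ℤ) : Equiv.Perm ℤ := affT n i (i + 1)

/-- Coxeter length: minimal length of a word in the simple reflections `s_1, …, s_n`. -/
noncomputable def wordLength (n : ℕ) (π : Equiv.Perm ℤ) : ℕ :=
  sInf {l : ℕ | ∃ w : List ℤ,
    (∀ x ∈ w, 1 ≤ x ∧ x ≤ (n : ℤ)) ∧ (w.map (affS n)).prod = π ∧ w.length = l}

/-- The set of inversions of `π`, up to the diagonal translation relation. -/
def InvPair (π : Equiv.Perm ℤ) : Type :=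
  {p : ℤ × ℤ // p.1 < p.2 ∧ π p.2 < π p.1}

/-- The number of equivalence classes of inversions of `π` under
`(a,b) ~ (a + mn, b + mn)`. -/
noncomputable def invLength (n : ℕ) (π : Equiv.Perm ℤ) : ℕ :=
  Nat.card (Quot fun p q : InvPair π =>
    ∃ m : ℤ, q.1.1 = p.1.1 + m * n ∧ q.1.2 = p.1.2 + m * n)

/-- Entry `c_i` of the code of an affine permutation. -/
noncomputable def codeEntry (π : Equiv.Perm ℤ) (i : ℤ) : ℕ :=
  Nat.card {j : ℤ // i < j ∧ π j < π i}

/-- Entry `ĉ_i` of the involution code of an affine involution. -/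
noncomputable def icodeEntry (z : Equiv.Perm ℤ) (i : ℤ) : ℕ :=
  Nat.card {j : ℤ // i < j ∧ z j < z i ∧ z j ≤ i}

/-- `ℓ'(z)`: `n` minus the number of orbits of `z` acting on `ℤ/nℤ`. -/
noncomputable def lprime (n : ℕ) (z : Equiv.Perm ℤ) : ℕ :=
  n - Nat.card (Quot fun a b : ZMod n => ((z (a.val : ℤ) : ℤ) : ZMod n) = b)

/-- The characterizing properties of the Demazure (0-Hecke) product on `S̃_n`:
closure, associativity, `s_i ∘ s_i = s_i`, and agreement with the group product
on length-additive factorizations. -/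
def IsDemazure (n : ℕ) (D : Equiv.Perm ℤ → Equiv.Perm ℤ → Equiv.Perm ℤ) : Prop :=
  (∀ a b, IsAffine n a → IsAffine n b → IsAffine n (D a b)) ∧
  (∀ a b c, IsAffine n a → IsAffine n b → IsAffine n c →
    D (D a b) c = D a (D b c)) ∧
  (∀ i : ℤ, D (affS n i) (affS n i) = affS n i) ∧
  (∀ a b, IsAffine n a → IsAffine n b →
    wordLength n (a * b) = wordLength n a + wordLength n b → D a b = a * b)

/-- The set of Hecke atoms `{π : π⁻¹ ∘ π = z}`. -/
def AHecke (n : ℕ) (D : Equiv.Perm ℤ → Equiv.Perm ℤ → Equiv.Perm ℤ)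
    (z : Equiv.Perm ℤ) : Set (Equiv.Perm ℤ) :=
  {π | IsAffine n π ∧ D π⁻¹ π = z}

/-- The set of atoms: minimal-length Hecke atoms. -/
def DemAtoms (n : ℕ) (D : Equiv.Perm ℤ → Equiv.Perm ℤ → Equiv.Perm ℤ)
    (z : Equiv.Perm ℤ) : Set (Equiv.Perm ℤ) :=
  {π | π ∈ AHecke n D z ∧ ∀ σ ∈ AHecke n D z, wordLength n π ≤ wordLength n σ}

/-- The Bruhat covering relation on `S̃_n`. -/
def BruhatCov (n : ℕ) (a b : Equiv.Perm ℤ) : Prop :=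
  (∃ i j : ℤ, i < j ∧ (j - i) % (n : ℤ) ≠ 0 ∧ b = a * affT n i j) ∧
  wordLength n b = wordLength n a + 1

/-- The Bruhat order on `S̃_n`. -/
def BruhatLE (n : ℕ) : Equiv.Perm ℤ → Equiv.Perm ℤ → Prop :=
  Relation.ReflTransGen (BruhatCov n)

/-- The covering relation of the Bruhat order restricted to involutions in `S̃_n`. -/
def BruhatCovI (n : ℕ) (y z : Equiv.Perm ℤ) : Prop :=
  IsAffine n y ∧ IsAffine n z ∧ y⁻¹ = y ∧ z⁻¹ = z ∧
  BruhatLE n y z ∧ y ≠ z ∧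
  ∀ w : Equiv.Perm ℤ, IsAffine n w → w⁻¹ = w →
    BruhatLE n y w → BruhatLE n w z → w = y ∨ w = z

/-- Strict dominance order on partitions (written as weakly decreasing functions). -/
def DomLT (p q : ℕ → ℕ) : Prop :=
  p ≠ q ∧ ∀ k : ℕ, ∑ i ∈ Finset.range k, p i ≤ ∑ i ∈ Finset.range k, q i

/-- The shape `λ(π)`: the transpose of the partition sorting the code of `π⁻¹`,
recorded as the weakly decreasing function `k ↦ λ(π)_{k+1}`. -/
noncomputable def affShape (n : ℕ) (π : Equiv.Perm ℤ) : ℕ → ℕ :=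
  fun k => Multiset.countP (fun x => k < x)
    ((Finset.Icc (1 : ℤ) (n : ℤ)).val.map (codeEntry π⁻¹))

/-- The shape `μ(z)`: the transpose of the partition sorting the involution code of `z`,
recorded as the weakly decreasing function `k ↦ μ(z)_{k+1}`. -/
noncomputable def invShape (n : ℕ) (z : Equiv.Perm ℤ) : ℕ → ℕ :=
  fun k => Multiset.countP (fun x => k < x)
    ((Finset.Icc (1 : ℤ) (n : ℤ)).val.map (icodeEntry z))

/-- The weakly decreasing rearrangement of a multiset of naturals, padded by zeros. -/
noncomputable def rearr (s : Multiset ℕ) : ℕ → ℕ :=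
  fun k => ((s.sort (· ≤ ·)).reverse).getD k 0

/-- Remove the entries of a list of integers that repeat an earlier residue mod `n`. -/
def dedupMod (n : ℕ) : List ℤ → List ℤ
  | [] => []
  | x :: xs => x :: dedupMod n (xs.filter fun y => (y - x) % (n : ℤ) ≠ 0)
termination_by l => l.length
decreasing_by
  simp only [List.length_cons, List.length_unattach]
  exact Nat.lt_succ_of_le ((List.length_filter_le _ _).trans (le_of_eq List.length_attach))

/-- The window `[[z(a₁), a₁, z(a₂), a₂, …]]` of `α_min(z)⁻¹`, where `a₁ < a₂ < ⋯`
are the elements `a ∈ [n]` with `a ≤ z(a)`. -/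
noncomputable def aminWindow (n : ℕ) (z : Equiv.Perm ℤ) : List ℤ :=
  dedupMod n
    ((((Finset.Icc (1 : ℤ) (n : ℤ)).sort (· ≤ ·)).filter fun a => a ≤ z a).flatMap
      fun a => [z a, a])

/-- Cyclically decreasing elements of `S̃_n`. -/
def IsCycDec (n : ℕ) (π : Equiv.Perm ℤ) : Prop :=
  ∃ w : List ℤ,
    (∀ x ∈ w, 1 ≤ x ∧ x ≤ (n : ℤ)) ∧ (w.map (affS n)).prod = π ∧
    w.length = wordLength n π ∧
    w.Pairwise fun a b => (a + 1 - b) % (n : ℤ) ≠ 0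

/-- The coefficient of the monomial `∏ₖ xₖ₊₁^(α k)` in Lam's affine Stanley symmetric
function `F_π`: the number of length-additive factorizations of `π` into cyclically
decreasing factors of lengths prescribed by `α`. -/
noncomputable def stanleyCoeff (n : ℕ) (π : Equiv.Perm ℤ) (α : ℕ →₀ ℕ) : ℕ :=
  Nat.card {f : ℕ → Equiv.Perm ℤ //
    (∀ k, IsCycDec n (f k)) ∧ (∀ k, wordLength n (f k) = α k) ∧
    (∑ k ∈ α.support, α k) = wordLength n π ∧
    ∃ N : ℕ, (∀ k, N ≤ k → f k = 1) ∧ ((List.range N).map f).prod = π}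

/-- The set `Φ⁻_r(y)` of Bruhat covers of `y` of the form `τⁿ_{i r}(y)` with `i < r`
and `i ∉ {r, y(r)} + nℤ`. -/
def PhiMinus (n : ℕ) (τ : ℤ → ℤ → Equiv.Perm ℤ → Equiv.Perm ℤ)
    (y : Equiv.Perm ℤ) (r : ℤ) : Set (Equiv.Perm ℤ) :=
  {z | BruhatCovI n y z ∧ ∃ i : ℤ, i < r ∧ (i - r) % (n : ℤ) ≠ 0 ∧
    (i - y r) % (n : ℤ) ≠ 0 ∧ z = τ i r y}

/-- The set `Φ⁺_r(y)` of Bruhat covers of `y` of the form `τⁿ_{r j}(y)` with `r < j`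
and `j ∉ {r, y(r)} + nℤ`. -/
def PhiPlus (n : ℕ) (τ : ℤ → ℤ → Equiv.Perm ℤ → Equiv.Perm ℤ)
    (y : Equiv.Perm ℤ) (r : ℤ) : Set (Equiv.Perm ℤ) :=
  {z | BruhatCovI n y z ∧ ∃ j : ℤ, r < j ∧ (j - r) % (n : ℤ) ≠ 0 ∧
    (j - y r) % (n : ℤ) ≠ 0 ∧ z = τ r j y}

/-- The affine symmetric group as a subtype of `Equiv.Perm ℤ`. -/
abbrev AffPerm (n : ℕ) := {π : Equiv.Perm ℤ // IsAffine n π}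

/-- The coproduct `Δ(π) = Σ_{π ≐ π'π''} π' ⊗ π''` on `ℚ S̃_n`. -/
noncomputable def affComul (n : ℕ) :
    (AffPerm n →₀ ℚ) →ₗ[ℚ] TensorProduct ℚ (AffPerm n →₀ ℚ) (AffPerm n →₀ ℚ) :=
  Finsupp.lift _ ℚ _ fun π : AffPerm n =>
    ∑ᶠ p ∈ {p : AffPerm n × AffPerm n |
        p.1.val * p.2.val = π.val ∧
        wordLength n π.val = wordLength n p.1.val + wordLength n p.2.val},
      (Finsupp.single p.1 (1 : ℚ)) ⊗ₜ[ℚ] (Finsupp.single p.2 (1 : ℚ))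

namespace AminProof


/-- shift-equivariance -/
def IsShift (n : ℕ) (f : ℤ → ℤ) : Prop := ∀ i : ℤ, f (i + n) = f i + n

lemma IsShift.mul {n : ℕ} {f : ℤ → ℤ} (hf : IsShift n f) (i m : ℤ) :
    f (i + m * n) = f i + m * n := by
  induction m using Int.induction_on with
  | zero => simp
  | succ k ih =>
      have h1 : i + ((k : ℤ) + 1) * n = (i + k * n) + n := by ring
      have h2 := hf (i + k * n)
      rw [h1, h2, ih]; ring
  | pred k ih =>
      have h1 : i + (-(k : ℤ) - 1) * n = (i + (-(k : ℤ)) * n) - n := by ring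
      have h2 := hf ((i + (-(k : ℤ)) * n) - n)
      have h3 : i + (-(k : ℤ)) * n - n + n = i + (-(k : ℤ)) * n := by ring
      rw [h3] at h2
      rw [h1]
      omega

lemma IsShift.comp {n : ℕ} {f g : ℤ → ℤ} (hf : IsShift n f) (hg : IsShift n g) :
    IsShift n (f ∘ g) := fun i => by simp [Function.comp, hg i, hf (g i)]

lemma isShift_one (n : ℕ) : IsShift n ⇑(1 : Equiv.Perm ℤ) := fun i => rfl

lemma IsShift.inv {n : ℕ} {a : Equiv.Perm ℤ} (hf : IsShift n ⇑a) : IsShift n ⇑a⁻¹ := by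
  intro i
  apply a.injective
  rw [show ∀ x, a (a⁻¹ x) = x from Equiv.apply_symm_apply a, hf,
    show ∀ x, a (a⁻¹ x) = x from Equiv.apply_symm_apply a]

section AffS

variable {n : ℕ} (hn : 2 ≤ n)

lemma one_emod (hn : 2 ≤ n) : (1 : ℤ) % (n : ℤ) = 1 :=
  Int.emod_eq_of_lt (by norm_num) (by exact_mod_cast hn)

include hn in
lemma affS_apply (i k : ℤ) :
    affS n i k = if (k - i) % (n : ℤ) = 0 then k + 1
      else if (k - i - 1) % (n : ℤ) = 0 then k - 1 else k := by
  have h1 : ¬ ((i + 1 - i) % (n : ℤ) = 0) := by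
    have : (i + 1 - i) = 1 := by ring
    rw [this, one_emod hn]; norm_num
  rw [affS, affT, dif_neg h1]
  show affTFun n i (i + 1) k = _
  unfold affTFun
  by_cases h2 : (k - i) % (n : ℤ) = 0
  · rw [if_pos h2, if_pos h2]; ring
  · rw [if_neg h2, if_neg h2]
    by_cases h3 : (k - (i + 1)) % (n : ℤ) = 0
    · have h4 : (k - i - 1) % (n : ℤ) = 0 := by rw [← h3]; ring_nf
      rw [if_pos h3, if_pos h4]; ring
    · have h4 : ¬ (k - i - 1) % (n : ℤ) = 0 := by
        intro h; apply h3; rw [← h]; ring_nf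
      rw [if_neg h3, if_neg h4]

include hn in
lemma affS_isShift (i : ℤ) : IsShift n ⇑(affS n i) := by
  intro k
  rw [affS_apply hn, affS_apply hn]
  have e1 : (k + (n : ℤ) - i) % (n : ℤ) = (k - i) % (n : ℤ) := by
    conv_lhs => rw [show k + (n : ℤ) - i = k - i + 1 * n by ring]
    rw [Int.add_mul_emod_self_right]
  have e2 : (k + (n : ℤ) - i - 1) % (n : ℤ) = (k - i - 1) % (n : ℤ) := by
    conv_lhs => rw [show k + (n : ℤ) - i - 1 = k - i - 1 + 1 * n by ring]
    rw [Int.add_mul_emod_self_right]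
  rw [e1, e2]
  split_ifs <;> ring

lemma affS_mul_self (n : ℕ) (i : ℤ) : affS n i * affS n i = 1 := by
  rw [affS, affT]
  split_ifs with h
  · simp
  · ext k
    simp only [Equiv.Perm.coe_mul, Function.comp_apply, Equiv.Perm.coe_one, id_eq,
      Function.Involutive.coe_toPerm]
    exact affTFun_involutive h k

lemma affS_affS (n : ℕ) (i k : ℤ) : affS n i (affS n i k) = k := by
  have := affS_mul_self n i
  have h2 : (affS n i * affS n i) k = (1 : Equiv.Perm ℤ) k := by rw [this]
  simpa using h2

include hn in
lemma affS_le (i k : ℤ) : k - 1 ≤ affS n i k ∧ affS n i k ≤ k + 1 := by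
  rw [affS_apply hn]; split_ifs <;> omega

include hn in
lemma affS_self (i : ℤ) : affS n i i = i + 1 := by
  rw [affS_apply hn]; simp

include hn in
lemma affS_succ (i : ℤ) : affS n i (i + 1) = i := by
  rw [affS_apply hn]
  have h1 : (i + 1 - i) % (n : ℤ) = 1 := by
    rw [show i + 1 - i = 1 by ring, one_emod hn]
  rw [if_neg (by omega), if_pos (by simp)]
  ring

end AffS


section InvSet

variable {n : ℕ}

lemma small_mod (hn : 0 < n) {d : ℤ} (h : d % (n : ℤ) = 0) (h1 : -(n : ℤ) < d)
    (h2 : d < n) : d = 0 := by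
  have hd : (n : ℤ) ∣ d := Int.dvd_of_emod_eq_zero h
  rcases hd with ⟨c, hc⟩
  have hn' : (0 : ℤ) < n := by exact_mod_cast hn
  have hc1 : c < 1 := by
    by_contra hcon
    push_neg at hcon
    nlinarith
  have hc2 : -1 < c := by
    by_contra hcon
    push_neg at hcon
    nlinarith
  have : c = 0 := by omega
  rw [hc, this, mul_zero]

lemma window_decomp (hn : 0 < n) (t j : ℤ) :
    ∃ r q : ℤ, j = r + q * n ∧ t < r ∧ r ≤ t + n := by
  have hn' : (0 : ℤ) < n := by exact_mod_cast hn
  set q := (j - t - 1) / (n : ℤ) with hq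
  set e := (j - t - 1) % (n : ℤ) with he
  have he0 : 0 ≤ e := Int.emod_nonneg _ (by omega)
  have he1 : e < n := Int.emod_lt_of_pos _ hn'
  have heq : (n : ℤ) * q + e = j - t - 1 := Int.mul_ediv_add_emod _ _
  have heq' : q * (n : ℤ) + e = j - t - 1 := by rw [mul_comm]; exact heq
  exact ⟨j - q * n, q, by ring, by linarith, by linarith⟩

/-- Inversions of `π` with first coordinate in the window `(t, t+n]`. -/
def invSet (n : ℕ) (π : Equiv.Perm ℤ) (t : ℤ) : Set (ℤ × ℤ) :=
  {p | t < p.1 ∧ p.1 ≤ t + n ∧ p.1 < p.2 ∧ π p.2 < π p.1}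

lemma mem_invSet {π : Equiv.Perm ℤ} {t : ℤ} {k j : ℤ} :
    (k, j) ∈ invSet n π t ↔ t < k ∧ k ≤ t + n ∧ k < j ∧ π j < π k := Iff.rfl

lemma invSet_finite (hn : 0 < n) {π : Equiv.Perm ℤ} (hπ : IsShift n ⇑π) (t : ℤ) :
    (invSet n π t).Finite := by
  have hn' : (0 : ℤ) < n := by exact_mod_cast hn
  have hne : (Finset.Icc (t + 1) (t + (n : ℤ))).Nonempty := by
    rw [Finset.nonempty_Icc]; omega
  set M := (Finset.Icc (t + 1) (t + (n : ℤ))).sup' hne (fun r => π r)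
  set m := (Finset.Icc (t + 1) (t + (n : ℤ))).inf' hne (fun r => π r)
  set C := (M - m) ⊔ 0 + 1
  have hCge : M - m + 1 ≤ C := by
    have h := le_max_left (M - m) (0 : ℤ)
    omega
  have hC0 : 1 ≤ C := by
    have h := le_max_right (M - m) (0 : ℤ)
    omega
  set B := t + C * (n : ℤ) with hB
  apply Set.Finite.subset (Set.finite_Icc ((t + 1, t + 1) : ℤ × ℤ) (t + n, B))
  rintro ⟨k, j⟩ hmem
  rw [mem_invSet] at hmem
  obtain ⟨h1, h2, h3, h4⟩ := hmem
  have hj : j ≤ B := by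
    by_contra hcon
    push_neg at hcon
    obtain ⟨r, q, hjrq, hr1, hr2⟩ := window_decomp hn t j
    have hπj : π j = π r + q * n := by rw [hjrq]; exact hπ.mul r q
    have hMr : m ≤ π r := Finset.inf'_le _ (Finset.mem_Icc.mpr ⟨by omega, by omega⟩)
    have hMk : π k ≤ M := Finset.le_sup' _ (Finset.mem_Icc.mpr ⟨by omega, by omega⟩)
    have hqC : C ≤ q := by
      have h5 : (C - 1) * (n : ℤ) < q * n := by
        have : q * (n : ℤ) = j - r := by rw [hjrq]; ring
        rw [this]
        have : B < j := hcon
        rw [hB] at this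
        nlinarith
      have h6 := lt_of_mul_lt_mul_right h5 (le_of_lt hn')
      omega
    have hq0 : 0 ≤ q := by omega
    have hqn : q ≤ q * n := le_mul_of_one_le_right hq0 (by exact_mod_cast hn)
    linarith
  rw [Set.mem_Icc]
  refine ⟨?_, ?_⟩ <;> rw [Prod.le_def] <;> constructor <;> simp only
  · omega
  · omega
  · omega
  · exact hj

lemma invSet_ncard_succ (hn : 0 < n) {π : Equiv.Perm ℤ} (hπ : IsShift n ⇑π) (t : ℤ) :
    (invSet n π (t + 1)).ncard = (invSet n π t).ncard := by
  have hn' : (0 : ℤ) < n := by exact_mod_cast hn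
  set f : ℤ × ℤ → ℤ × ℤ := fun p => if p.1 = t + 1 then (p.1 + n, p.2 + n) else p with hf
  have hinj : Set.InjOn f (invSet n π t) := by
    rintro ⟨k, j⟩ hk ⟨k', j'⟩ hk' heq
    rw [mem_invSet] at hk hk'
    obtain ⟨hk1, hk2, -, -⟩ := hk
    obtain ⟨hk1', hk2', -, -⟩ := hk'
    simp only [hf] at heq
    split_ifs at heq with e1 e2 e2 <;>
      simp only [Prod.mk.injEq, Prod.ext_iff] at heq ⊢ <;> constructor <;> omega
  have himg : f '' invSet n π t = invSet n π (t + 1) := by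
    apply subset_antisymm
    · rintro _ ⟨⟨k, j⟩, hmem, rfl⟩
      rw [mem_invSet] at hmem
      obtain ⟨h1, h2, h3, h4⟩ := hmem
      simp only [hf]
      split_ifs with e1
      · rw [mem_invSet]
        have hj := hπ j
        have hk := hπ k
        exact ⟨by omega, by omega, by omega, by omega⟩
      · rw [mem_invSet]
        exact ⟨by omega, by omega, h3, h4⟩
    · rintro ⟨k, j⟩ hmem
      rw [mem_invSet] at hmem
      obtain ⟨h1, h2, h3, h4⟩ := hmem
      by_cases e1 : k = t + 1 + n
      · subst e1
        refine ⟨(t + 1, j - n), ?_, ?_⟩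
        · rw [mem_invSet]
          have hj : π (j - n + n) = π (j - n) + n := hπ (j - n)
          have hk : π (t + 1 + (n : ℤ)) = π (t + 1) + n := hπ (t + 1)
          have he : j - (n : ℤ) + n = j := by ring
          rw [he] at hj
          refine ⟨by omega, by omega, by omega, by omega⟩
        · simp only [hf, if_pos rfl]
          have he : j - (n : ℤ) + n = j := by ring
          rw [Prod.ext_iff]
          exact ⟨by simp, by simp [he]⟩
      · refine ⟨(k, j), ?_, ?_⟩
        · rw [mem_invSet]
          exact ⟨by omega, by omega, h3, h4⟩
        · simp only [hf]
          rw [if_neg (by omega)]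
  rw [← himg]
  exact Set.ncard_image_of_injOn hinj

/-- The affine inversion number. -/
noncomputable def NN (n : ℕ) (π : Equiv.Perm ℤ) : ℕ := (invSet n π 0).ncard

lemma invSet_ncard_eq (hn : 0 < n) {π : Equiv.Perm ℤ} (hπ : IsShift n ⇑π) (t : ℤ) :
    (invSet n π t).ncard = NN n π := by
  induction t using Int.induction_on with
  | zero => rfl
  | succ k ih => rw [invSet_ncard_succ hn hπ, ih]
  | pred k ih => rw [← ih, ← invSet_ncard_succ hn hπ (-(k : ℤ) - 1)]; norm_num

end InvSet

section Toggle

variable {n : ℕ}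

lemma mul_affS_isShift (hn : 2 ≤ n) {π : Equiv.Perm ℤ} (hπ : IsShift n ⇑π) (i : ℤ) :
    IsShift n ⇑(π * affS n i) := by
  intro k
  simp only [Equiv.Perm.coe_mul, Function.comp_apply]
  rw [affS_isShift hn i k, hπ]

lemma affS_window (hn : 2 ≤ n) {i k : ℤ} (h1 : i - 1 < k) (h2 : k ≤ i - 1 + n) :
    (k = i ∧ affS n i k = i + 1) ∨
    (k = i + 1 ∧ affS n i k = i) ∨
    (affS n i k = k) := by
  have hn0 : 0 < n := by omega
  by_cases ha : (k - i) % (n : ℤ) = 0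
  · have hki : k - i = 0 := small_mod hn0 ha (by omega) (by omega)
    have hk : k = i := by omega
    left
    exact ⟨hk, by rw [hk]; exact affS_self hn i⟩
  · by_cases hb : (k - i - 1) % (n : ℤ) = 0
    · have hki : k - i - 1 = 0 := small_mod hn0 hb (by omega) (by omega)
      have hk : k = i + 1 := by omega
      right; left
      exact ⟨hk, by rw [hk]; exact affS_succ hn i⟩
    · right; right
      rw [affS_apply hn, if_neg ha, if_neg hb]

lemma NN_toggle_lt (hn : 2 ≤ n) {π : Equiv.Perm ℤ} (hπ : IsShift n ⇑π) {i : ℤ}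
    (hd : π i < π (i + 1)) : NN n (π * affS n i) = NN n π + 1 := by
  have hn0 : 0 < n := by omega
  have hσ : IsShift n ⇑(π * affS n i) := mul_affS_isShift hn hπ i
  set t := i - 1 with ht
  have hX : ∀ π' : Equiv.Perm ℤ,
      (fun p : ℤ × ℤ => (affS n i p.1, affS n i p.2)) ''
        (invSet n (π' * affS n i) t \ {((i : ℤ), i + 1)}) ⊆
      invSet n π' t \ {((i : ℤ), i + 1)} := by
    rintro π' _ ⟨⟨k, j⟩, ⟨hmem, hne⟩, rfl⟩
    rw [mem_invSet] at hmem
    obtain ⟨h1, h2, h3, h4⟩ := hmem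
    have h4' : π' (affS n i j) < π' (affS n i k) := h4
    have hkb := affS_le hn i k
    have hjb := affS_le hn i j
    rw [Set.mem_singleton_iff, Prod.ext_iff, not_and_or] at hne
    have hinj : affS n i k ≠ affS n i j := by
      intro h
      exact absurd ((affS n i).injective h) (by omega)
    have hwin : (t < affS n i k ∧ affS n i k ≤ t + n) ∧ affS n i k < affS n i j := by
      rcases affS_window hn h1 h2 with ⟨hk, hsk⟩ | ⟨hk, hsk⟩ | hsk
      · have hjne : j ≠ i + 1 := by
          rcases hne with h | h
          · exact absurd hk (by simpa using h)
          · simpa using h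
        refine ⟨⟨by omega, by omega⟩, ?_⟩
        apply lt_of_le_of_ne _ hinj
        omega
      · refine ⟨⟨by omega, by omega⟩, by omega⟩
      · refine ⟨⟨by omega, by omega⟩, ?_⟩
        apply lt_of_le_of_ne _ hinj
        omega
    constructor
    · rw [mem_invSet]
      exact ⟨hwin.1.1, hwin.1.2, hwin.2, h4'⟩
    · intro hc
      rw [Set.mem_singleton_iff, Prod.ext_iff] at hc
      obtain ⟨hc1, hc2⟩ := hc
      simp only at hc1 hc2
      have hk := congrArg (affS n i) hc1
      have hj := congrArg (affS n i) hc2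
      rw [affS_affS, affS_self hn] at hk
      rw [affS_affS, affS_succ hn] at hj
      omega
  have hff : ∀ p : ℤ × ℤ, (affS n i (affS n i p.1), affS n i (affS n i p.2)) = p := by
    intro p; rw [affS_affS, affS_affS]
  have hLI : Function.LeftInverse (fun p : ℤ × ℤ => (affS n i p.1, affS n i p.2))
      (fun p : ℤ × ℤ => (affS n i p.1, affS n i p.2)) := fun p => hff p
  have hfinj : Function.Injective (fun p : ℤ × ℤ => (affS n i p.1, affS n i p.2)) :=
    Function.LeftInverse.injective hLI
  set A := invSet n (π * affS n i) t \ {((i : ℤ), i + 1)} with hA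
  set B := invSet n π t \ {((i : ℤ), i + 1)} with hBd
  have hsub1 : (fun p : ℤ × ℤ => (affS n i p.1, affS n i p.2)) '' A ⊆ B := hX π
  have hsub2 : (fun p : ℤ × ℤ => (affS n i p.1, affS n i p.2)) '' B ⊆ A := by
    have h := hX (π * affS n i)
    rw [mul_assoc, affS_mul_self, mul_one] at h
    exact h
  have himg : (fun p : ℤ × ℤ => (affS n i p.1, affS n i p.2)) '' A = B := by
    apply subset_antisymm hsub1
    intro p hp
    have h1 : p ∈ (fun p : ℤ × ℤ => (affS n i p.1, affS n i p.2)) ''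
        ((fun p : ℤ × ℤ => (affS n i p.1, affS n i p.2)) '' B) := by
      rw [Set.image_image]
      simp only [affS_affS]
      simpa using hp
    exact Set.image_mono hsub2 h1
  have hAcard : A.ncard = B.ncard := by
    rw [← himg, Set.ncard_image_of_injOn (Function.Injective.injOn hfinj)]
  have hp1 : ((i : ℤ), i + 1) ∈ invSet n (π * affS n i) t := by
    rw [mem_invSet]
    refine ⟨by omega, by omega, by omega, ?_⟩
    show π (affS n i (i + 1)) < π (affS n i i)
    rw [affS_succ hn, affS_self hn]
    exact hd
  have hp2 : ((i : ℤ), i + 1) ∉ invSet n π t := by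
    rw [mem_invSet]
    push_neg
    intro _ _ _
    exact le_of_lt hd
  have hBeq : B = invSet n π t := Set.diff_singleton_eq_self hp2
  have hfin1 := invSet_finite hn0 hσ t
  have hc1 : A.ncard + 1 = (invSet n (π * affS n i) t).ncard :=
    Set.ncard_diff_singleton_add_one hp1 hfin1
  calc NN n (π * affS n i) = (invSet n (π * affS n i) t).ncard :=
        (invSet_ncard_eq hn0 hσ t).symm
    _ = A.ncard + 1 := hc1.symm
    _ = B.ncard + 1 := by rw [hAcard]
    _ = (invSet n π t).ncard + 1 := by rw [hBeq]
    _ = NN n π + 1 := by rw [invSet_ncard_eq hn0 hπ t]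

lemma NN_toggle_gt (hn : 2 ≤ n) {π : Equiv.Perm ℤ} (hπ : IsShift n ⇑π) {i : ℤ}
    (hd : π (i + 1) < π i) : NN n π = NN n (π * affS n i) + 1 := by
  have h := NN_toggle_lt hn (mul_affS_isShift hn hπ i) (i := i) ?_
  · rw [mul_assoc, affS_mul_self, mul_one] at h
    exact h
  · show π (affS n i i) < π (affS n i (i + 1))
    rw [affS_self hn, affS_succ hn]
    exact hd

lemma eq_one_of_incr (hn : 0 < n) {π : Equiv.Perm ℤ} (hπ : IsAffine n π)
    (h : ∀ x : ℤ, 1 ≤ x → x ≤ n → π x < π (x + 1)) : π = 1 := by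
  have hsh : IsShift n ⇑π := hπ.1
  have h' : ∀ x : ℤ, π x < π (x + 1) := by
    intro x
    obtain ⟨r, q, hx, hr1, hr2⟩ := window_decomp hn 0 x
    have h1 : π x = π r + q * n := by rw [hx]; exact hsh.mul r q
    have h2 : π (x + 1) = π (r + 1) + q * n := by
      rw [hx, show r + q * (n : ℤ) + 1 = (r + 1) + q * n by ring]
      exact hsh.mul (r + 1) q
    have h3 := h r (by omega) (by omega)
    linarith
  have hmono : ∀ x y : ℤ, x < y → π x < π y := by
    intro x y hxy
    have key : ∀ y : ℤ, x + 1 ≤ y → π x < π y := by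
      refine Int.le_induction ?_ ?_
      · exact h' x
      · intro m _ ih
        exact lt_trans ih (h' m)
    exact key y (by omega)
  have hsucc : ∀ x : ℤ, π (x + 1) = π x + 1 := by
    intro x
    by_contra hne
    have hlt : π x + 1 < π (x + 1) := by
      have := h' x; omega
    set m := π.symm (π x + 1) with hm
    have hπm : π m = π x + 1 := Equiv.apply_symm_apply π (π x + 1)
    rcases lt_trichotomy m x with hc | hc | hc
    · have := hmono m x hc; omega
    · rw [hc] at hπm; omega
    · rcases eq_or_lt_of_le (show x + 1 ≤ m by omega) with he | hlt2
      · rw [← he] at hπm; omega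
      · have := hmono (x + 1) m hlt2; omega
  have hlin : ∀ x : ℤ, π x = x + π 0 := by
    intro x
    induction x using Int.induction_on with
    | zero => ring
    | succ k ih => rw [hsucc, ih]; ring
    | pred k ih =>
        have h5 := hsucc (-(k : ℤ) - 1)
        rw [show -(k : ℤ) - 1 + 1 = -(k : ℤ) by ring] at h5
        omega
  have hsum := hπ.2
  have hsum2 : ∑ i ∈ Finset.Icc (1 : ℤ) (n : ℤ), π i
      = (∑ i ∈ Finset.Icc (1 : ℤ) (n : ℤ), i) + (n : ℤ) * π 0 := by
    rw [Finset.sum_congr rfl (fun i _ => hlin i), Finset.sum_add_distrib,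
      Finset.sum_const, Int.card_Icc]
    simp only [nsmul_eq_mul]
    congr 1
    have : ((n : ℤ) + 1 - 1).toNat = n := by omega
    rw [this]
  have hzero : π 0 = 0 := by
    rw [hsum2] at hsum
    have hn' : (n : ℤ) ≠ 0 := by exact_mod_cast hn.ne'
    have hz : (n : ℤ) * π 0 = 0 := by linarith
    exact (mul_eq_zero.mp hz).resolve_left hn'
  apply Equiv.ext
  intro x
  rw [hlin, hzero]
  simp

lemma NN_one (n : ℕ) : NN n 1 = 0 := by
  have h : invSet n 1 0 = ∅ := by
    ext ⟨k, j⟩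
    rw [mem_invSet]
    simp only [Set.mem_empty_iff_false, iff_false, not_and]
    intro _ _ h3
    simp only [Equiv.Perm.coe_one, id_eq]
    omega
  rw [NN, h, Set.ncard_empty]

lemma eq_one_of_NN_zero (hn : 0 < n) {π : Equiv.Perm ℤ} (hπ : IsAffine n π)
    (h : NN n π = 0) : π = 1 := by
  have hsh := hπ.1
  have hempty : invSet n π 0 = ∅ := (Set.ncard_eq_zero (invSet_finite hn hsh 0)).mp h
  apply eq_one_of_incr hn hπ
  intro x hx1 hx2
  rcases lt_trichotomy (π x) (π (x + 1)) with hc | hc | hc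
  · exact hc
  · exact absurd (π.injective hc) (by omega)
  · exfalso
    have hmem : (x, x + 1) ∈ invSet n π 0 := mem_invSet.mpr ⟨by omega, by omega, by omega, hc⟩
    rw [hempty] at hmem
    exact hmem

lemma isAffine_mul_affS (hn : 2 ≤ n) {π : Equiv.Perm ℤ} (hπ : IsAffine n π) (i : ℤ) :
    IsAffine n (π * affS n i) := by
  have hn0 : 0 < n := by omega
  obtain ⟨hsh, hsum⟩ := hπ
  refine ⟨mul_affS_isShift hn hsh i, ?_⟩
  obtain ⟨k₁, q₁, hi1, hk11, hk12⟩ := window_decomp hn0 0 i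
  obtain ⟨k₂, q₂, hi2, hk21, hk22⟩ := window_decomp hn0 0 (i + 1)
  have hk12ne : k₁ ≠ k₂ := by
    intro he
    have h1 : (1 : ℤ) = (q₂ - q₁) * n := by rw [sub_mul]; linarith
    have h2 : (n : ℤ) ∣ 1 := ⟨q₂ - q₁, by linarith⟩
    have := Int.le_of_dvd one_pos h2
    omega
  have hs1 : affS n i k₁ = k₁ + 1 := by
    rw [affS_apply hn, if_pos]
    exact Int.emod_eq_zero_of_dvd ⟨-q₁, by
      have h := mul_neg (n : ℤ) q₁
      have h2 := mul_comm (n : ℤ) q₁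
      linarith⟩
  have hs2 : affS n i k₂ = k₂ - 1 := by
    rw [affS_apply hn]
    have hb : (k₂ - i - 1) % (n : ℤ) = 0 := Int.emod_eq_zero_of_dvd ⟨-q₂, by
      have h := mul_neg (n : ℤ) q₂
      have h2 := mul_comm (n : ℤ) q₂
      linarith⟩
    have ha : ¬ (k₂ - i) % (n : ℤ) = 0 := by
      intro hcon
      obtain ⟨c, hc⟩ := Int.dvd_of_emod_eq_zero hcon
      obtain ⟨c', hc'⟩ := Int.dvd_of_emod_eq_zero hb
      have : (n : ℤ) ∣ 1 := ⟨c - c', by rw [mul_sub, ← hc, ← hc']; ring⟩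
      have := Int.le_of_dvd one_pos this
      omega
    rw [if_neg ha, if_pos hb]
  have hsother : ∀ k : ℤ, 1 ≤ k → k ≤ n → k ≠ k₁ → k ≠ k₂ → affS n i k = k := by
    intro k hk1 hk2 hne1 hne2
    rw [affS_apply hn]
    have ha : ¬ (k - i) % (n : ℤ) = 0 := by
      intro hcon
      obtain ⟨c, hc⟩ := Int.dvd_of_emod_eq_zero hcon
      have hkk : k - k₁ = (c + q₁) * n := by
        rw [add_mul]
        have h6 := mul_comm (n : ℤ) c
        linarith
      have h5 : k - k₁ = 0 := small_mod hn0 (Int.emod_eq_zero_of_dvd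
        ⟨c + q₁, by rw [mul_comm]; exact hkk⟩) (by omega) (by omega)
      omega
    have hb : ¬ (k - i - 1) % (n : ℤ) = 0 := by
      intro hcon
      obtain ⟨c, hc⟩ := Int.dvd_of_emod_eq_zero hcon
      have hkk : k - k₂ = (c + q₂) * n := by
        rw [add_mul]
        have h6 := mul_comm (n : ℤ) c
        linarith
      have h5 : k - k₂ = 0 := small_mod hn0 (Int.emod_eq_zero_of_dvd
        ⟨c + q₂, by rw [mul_comm]; exact hkk⟩) (by omega) (by omega)
      omega
    rw [if_neg ha, if_neg hb]
  have hmem1 : k₁ ∈ Finset.Icc (1 : ℤ) (n : ℤ) := Finset.mem_Icc.mpr ⟨by omega, by omega⟩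
  have hmem2 : k₂ ∈ (Finset.Icc (1 : ℤ) (n : ℤ)).erase k₁ :=
    Finset.mem_erase.mpr ⟨fun h => hk12ne h.symm, Finset.mem_Icc.mpr ⟨by omega, by omega⟩⟩
  have key : ∀ f : ℤ → ℤ, ∑ k ∈ Finset.Icc (1 : ℤ) (n : ℤ), f k
      = f k₁ + (f k₂ + ∑ k ∈ ((Finset.Icc (1 : ℤ) (n : ℤ)).erase k₁).erase k₂, f k) := by
    intro f
    rw [Finset.add_sum_erase _ _ hmem2, Finset.add_sum_erase _ _ hmem1]
  have hrest : ∑ k ∈ ((Finset.Icc (1 : ℤ) (n : ℤ)).erase k₁).erase k₂, π (affS n i k)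
      = ∑ k ∈ ((Finset.Icc (1 : ℤ) (n : ℤ)).erase k₁).erase k₂, π k := by
    apply Finset.sum_congr rfl
    intro k hk
    have h1 := Finset.mem_erase.mp hk
    have h2 := Finset.mem_erase.mp h1.2
    have h3 := Finset.mem_Icc.mp h2.2
    rw [hsother k h3.1 h3.2 h2.1 h1.1]
  have hval1 : π (affS n i k₁) = π k₂ + (q₂ - q₁) * n := by
    rw [hs1, show k₁ + 1 = k₂ + (q₂ - q₁) * (n : ℤ) by rw [sub_mul]; linarith]
    exact IsShift.mul hsh k₂ (q₂ - q₁)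
  have hval2 : π (affS n i k₂) = π k₁ + (q₁ - q₂) * n := by
    rw [hs2, show k₂ - 1 = k₁ + (q₁ - q₂) * (n : ℤ) by rw [sub_mul]; linarith]
    exact IsShift.mul hsh k₁ (q₁ - q₂)
  show ∑ k ∈ Finset.Icc (1 : ℤ) (n : ℤ), π (affS n i k) = _
  rw [key (fun k => π (affS n i k)), hrest, hval1, hval2]
  rw [key π] at hsum
  rw [← hsum]
  have hq : (q₁ - q₂) * (n : ℤ) = -((q₂ - q₁) * n) := by ring
  linarith

lemma exists_word_of_NN (hn : 2 ≤ n) :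
    ∀ m : ℕ, ∀ π : Equiv.Perm ℤ, IsAffine n π → NN n π = m →
    ∃ w : List ℤ, (∀ x ∈ w, 1 ≤ x ∧ x ≤ (n : ℤ)) ∧ (w.map (affS n)).prod = π ∧ w.length = m := by
  intro m
  induction m using Nat.strong_induction_on with
  | _ m ih =>
    intro π hπ hN
    rcases Nat.eq_zero_or_pos m with h0 | hpos
    · subst h0
      have hone : π = 1 := eq_one_of_NN_zero (by omega) hπ hN
      exact ⟨[], by simp, by simp [hone], rfl⟩
    · have hne1 : π ≠ 1 := by
        intro h
        rw [h, NN_one] at hN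
        omega
      have hdesc : ∃ x : ℤ, 1 ≤ x ∧ x ≤ (n : ℤ) ∧ π (x + 1) < π x := by
        by_contra hcon
        push_neg at hcon
        apply hne1
        apply eq_one_of_incr (by omega) hπ
        intro x h1 h2
        have h3 := hcon x h1 h2
        rcases lt_trichotomy (π x) (π (x + 1)) with hc | hc | hc
        · exact hc
        · exact absurd (π.injective hc) (by omega)
        · omega
      obtain ⟨x, hx1, hx2, hx3⟩ := hdesc
      have hσ : IsAffine n (π * affS n x) := isAffine_mul_affS hn hπ x
      have hNN : NN n π = NN n (π * affS n x) + 1 := NN_toggle_gt hn hπ.1 hx3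
      have hlt : NN n (π * affS n x) < m := by omega
      obtain ⟨w, hw1, hw2, hw3⟩ := ih _ hlt (π * affS n x) hσ rfl
      refine ⟨w ++ [x], ?_, ?_, ?_⟩
      · intro y hy
        rcases List.mem_append.mp hy with h | h
        · exact hw1 y h
        · simp only [List.mem_singleton] at h
          subst h
          exact ⟨hx1, hx2⟩
      · rw [List.map_append, List.prod_append]
        simp only [List.map_cons, List.map_nil, List.prod_cons, List.prod_nil, mul_one]
        rw [hw2, mul_assoc, affS_mul_self, mul_one]
      · simp only [List.length_append, List.length_singleton]
        omega

lemma prod_isShift (hn : 2 ≤ n) (w : List ℤ) : IsShift n ⇑((w.map (affS n)).prod) := by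
  induction w with
  | nil => simpa using isShift_one n
  | cons x w ih =>
      simp only [List.map_cons, List.prod_cons]
      have h : ⇑(affS n x * (w.map (affS n)).prod)
          = ⇑(affS n x) ∘ ⇑((w.map (affS n)).prod) := rfl
      rw [h]
      exact (affS_isShift hn x).comp ih

lemma NN_prod_le (hn : 2 ≤ n) (w : List ℤ) : NN n ((w.map (affS n)).prod) ≤ w.length := by
  induction w using List.reverseRecOn with
  | nil => simp [NN_one]
  | append_singleton w x ih =>
      rw [List.map_append, List.prod_append]
      simp only [List.map_cons, List.map_nil, List.prod_cons, List.prod_nil, mul_one]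
      have hsh : IsShift n ⇑((w.map (affS n)).prod) := prod_isShift hn w
      rcases lt_trichotomy ((w.map (affS n)).prod x) ((w.map (affS n)).prod (x + 1))
        with hc | hc | hc
      · rw [NN_toggle_lt hn hsh hc]
        simp only [List.length_append, List.length_singleton]
        omega
      · exact absurd (((w.map (affS n)).prod).injective hc) (by omega)
      · have h := NN_toggle_gt hn hsh hc
        simp only [List.length_append, List.length_singleton]
        omega

lemma wordLength_eq_NN (hn : 2 ≤ n) {π : Equiv.Perm ℤ} (hπ : IsAffine n π) :
    wordLength n π = NN n π := by
  obtain ⟨w, hw1, hw2, hw3⟩ := exists_word_of_NN hn (NN n π) π hπ rfl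
  have hdef : wordLength n π = sInf {l : ℕ | ∃ w : List ℤ,
      (∀ x ∈ w, 1 ≤ x ∧ x ≤ (n : ℤ)) ∧ (w.map (affS n)).prod = π ∧ w.length = l} := rfl
  apply le_antisymm
  · exact Nat.sInf_le ⟨w, hw1, hw2, hw3⟩
  · have hne : {l : ℕ | ∃ w : List ℤ,
        (∀ x ∈ w, 1 ≤ x ∧ x ≤ (n : ℤ)) ∧ (w.map (affS n)).prod = π ∧ w.length = l}.Nonempty :=
      ⟨NN n π, w, hw1, hw2, hw3⟩
    obtain ⟨w', hw1', hw2', hw3'⟩ := Nat.sInf_mem hne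
    rw [hdef, ← hw3', ← hw2']
    exact NN_prod_le hn w'

lemma length_lt_iff (hn : 2 ≤ n) {π : Equiv.Perm ℤ} (hπ : IsAffine n π) (i : ℤ) :
    wordLength n (π * affS n i) < wordLength n π ↔ π (i + 1) < π i := by
  have hσ : IsAffine n (π * affS n i) := isAffine_mul_affS hn hπ i
  rw [wordLength_eq_NN hn hσ, wordLength_eq_NN hn hπ]
  rcases lt_trichotomy (π i) (π (i + 1)) with hc | hc | hc
  · rw [NN_toggle_lt hn hπ.1 hc]
    constructor
    · intro h; omega
    · intro h; omega
  · exact absurd (π.injective hc) (by omega)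
  · have h := NN_toggle_gt hn hπ.1 hc
    exact ⟨fun _ => hc, fun _ => by omega⟩

end Toggle

section Window

variable {n : ℕ} {z : Equiv.Perm ℤ}

lemma emod_sub_sym {u v : ℤ} (h : (u - v) % (n : ℤ) = 0) : (v - u) % (n : ℤ) = 0 := by
  obtain ⟨c, hc⟩ := Int.dvd_of_emod_eq_zero h
  exact Int.emod_eq_zero_of_dvd ⟨-c, by linarith [mul_neg (n : ℤ) c]⟩

lemma cong_ex {u v : ℤ} (h : (u - v) % (n : ℤ) = 0) : ∃ m : ℤ, u = v + m * n := by
  obtain ⟨c, hc⟩ := Int.dvd_of_emod_eq_zero h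
  exact ⟨c, by linarith [mul_comm (n : ℤ) c]⟩

lemma cong_mk {u v m : ℤ} (h : u = v + m * n) : (u - v) % (n : ℤ) = 0 :=
  Int.emod_eq_zero_of_dvd ⟨m, by linarith [mul_comm (n : ℤ) m]⟩

section Zfacts

variable (hn : 0 < n) (hzs : IsShift n ⇑z) (hzz : ∀ i : ℤ, z (z i) = i)
include hn hzs hzz

lemma zfix_of_cong {x : ℤ} (hx3 : x ≤ z x) (h : (z x - x) % (n : ℤ) = 0) : z x = x := by
  obtain ⟨m, hm⟩ := cong_ex h
  have happ : z (x + m * (n : ℤ)) = z x + m * n := IsShift.mul hzs x m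
  rw [← hm, hzz] at happ
  have hmn : m * (n : ℤ) = 0 := by linarith
  rw [hm, hmn, add_zero]

lemma cross_zz {x y : ℤ} (hx1 : 1 ≤ x) (hx2 : x ≤ n) (hy1 : 1 ≤ y) (hy2 : y ≤ n)
    (h : (z x - z y) % (n : ℤ) = 0) : x = y := by
  obtain ⟨m, hm⟩ := cong_ex h
  have happ : z (z y + m * (n : ℤ)) = z (z y) + m * n := IsShift.mul hzs (z y) m
  rw [← hm, hzz, hzz] at happ
  have h0 : x - y = 0 := small_mod hn (cong_mk happ) (by omega) (by omega)
  omega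

lemma cross_zx {x y : ℤ} (hx1 : 1 ≤ x) (hx2 : x ≤ n) (hx3 : x ≤ z x)
    (hy1 : 1 ≤ y) (hy2 : y ≤ n) (hy3 : y ≤ z y)
    (h : (z x - y) % (n : ℤ) = 0) : x = y := by
  obtain ⟨m, hm⟩ := cong_ex h
  have happ : z (y + m * (n : ℤ)) = z y + m * n := IsShift.mul hzs y m
  rw [← hm, hzz] at happ
  -- happ : x = z y + m * n, hm : z x = y + m * n
  have h1 : x = z x := by linarith
  have h0 : x - y = 0 := small_mod hn (cong_mk (by linarith : x = y + m * (n : ℤ))) (by omega) (by omega)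
  omega

/-- the per-block window contribution -/
def blockOf (z : Equiv.Perm ℤ) (a : ℤ) : List ℤ := if z a = a then [a] else [z a, a]

omit hn hzs hzz in
lemma mem_blockOf {a v : ℤ} (h : v ∈ blockOf z a) : v = a ∨ (z a ≠ a ∧ v = z a) := by
  unfold blockOf at h
  split_ifs at h with hf
  · simp at h; exact Or.inl h
  · rcases List.mem_pair.mp h with h | h
    · exact Or.inr ⟨hf, h⟩
    · exact Or.inl h

omit hn hzs hzz in
lemma self_mem_blockOf (a : ℤ) : a ∈ blockOf z a := by
  unfold blockOf; split_ifs <;> simp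

lemma lo_of_mem_blockOf {a v : ℤ} (ha : a ≤ z a) (h : v ∈ blockOf z a) (hlo : v ≤ z v) :
    v = a := by
  rcases mem_blockOf h with h1 | ⟨hne, h1⟩
  · exact h1
  · exfalso
    have : z v = a := by rw [h1, hzz]
    have : a < z a := lt_of_le_of_ne ha (Ne.symm hne)
    omega

/-- main flatMap structure lemma: dedupMod recovers the blocks -/
lemma dedup_flat :
    ∀ l : List ℤ, (∀ x ∈ l, 1 ≤ x ∧ x ≤ (n : ℤ) ∧ x ≤ z x) → l.Pairwise (· ≠ ·) →
    dedupMod n (l.flatMap fun a => [z a, a]) = l.flatMap (blockOf z) := by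
  intro l
  induction l with
  | nil => intro _ _; simp only [List.flatMap_nil]; rw [dedupMod]
  | cons x l ih =>
    intro hmem hpw
    obtain ⟨hx1, hx2, hx3⟩ := hmem x List.mem_cons_self
    have hxl : ∀ y ∈ l, x ≠ y := (List.pairwise_cons.mp hpw).1
    have hpl : l.Pairwise (· ≠ ·) := (List.pairwise_cons.mp hpw).2
    have hml : ∀ y ∈ l, 1 ≤ y ∧ y ≤ (n : ℤ) ∧ y ≤ z y := fun y hy => hmem y (List.mem_cons_of_mem _ hy)
    set R := l.flatMap fun a => [z a, a] with hR
    have hRkeep : ∀ v ∈ R, ((v - z x) % (n : ℤ) ≠ 0) ∧ ((v - x) % (n : ℤ) ≠ 0) := by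
      intro v hv
      rw [hR, List.mem_flatMap] at hv
      obtain ⟨y, hyl, hvy⟩ := hv
      obtain ⟨hy1, hy2, hy3⟩ := hml y hyl
      have hxy : x ≠ y := hxl y hyl
      rcases List.mem_pair.mp hvy with hveq | hveq
      · rw [hveq]
        constructor
        · intro hc
          exact hxy (cross_zz hn hzs hzz hy1 hy2 hx1 hx2 hc).symm
        · intro hc
          exact hxy (cross_zx hn hzs hzz hy1 hy2 hy3 hx1 hx2 hx3 hc).symm
      · rw [hveq]
        constructor
        · intro hc
          exact hxy (cross_zx hn hzs hzz hx1 hx2 hx3 hy1 hy2 hy3 (emod_sub_sym hc))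
        · intro hc
          have h0 : y - x = 0 := small_mod hn hc (by omega) (by omega)
          exact hxy (by omega)
    have hstep : (x :: l).flatMap (fun a => [z a, a]) = z x :: x :: R := by
      simp [hR]
    rw [hstep, dedupMod]
    by_cases hfx : z x = x
    · have hfilter : List.filter (fun y => decide ((y - z x) % (n : ℤ) ≠ 0)) (x :: R) = R := by
        rw [List.filter_cons]
        have hx0 : ¬ ((x - z x) % (n : ℤ) ≠ 0) := by
          rw [hfx]
          simp
        rw [if_neg (by simpa using hx0)]
        apply List.filter_eq_self.mpr
        intro v hv
        simpa using (hRkeep v hv).1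
      rw [hfilter, ih hml hpl]
      have : blockOf z x = [x] := by unfold blockOf; rw [if_pos hfx]
      simp [this, hfx]
    · have hfilter1 : List.filter (fun y => decide ((y - z x) % (n : ℤ) ≠ 0)) (x :: R)
          = x :: R := by
        apply List.filter_eq_self.mpr
        intro v hv
        rcases List.mem_cons.mp hv with rfl | hv
        · simp only [decide_eq_true_iff]
          intro hc
          exact hfx (zfix_of_cong hn hzs hzz hx3 (emod_sub_sym hc))
        · simpa using (hRkeep v hv).1
      rw [hfilter1, dedupMod]
      have hfilter2 : List.filter (fun y => decide ((y - x) % (n : ℤ) ≠ 0)) R = R := by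
        apply List.filter_eq_self.mpr
        intro v hv
        simpa using (hRkeep v hv).2
      rw [hfilter2, ih hml hpl]
      have : blockOf z x = [z x, x] := by unfold blockOf; rw [if_neg hfx]
      simp [this]

/-- pairwise increasing on Lo elements -/
lemma flat_pairwise_lo :
    ∀ l : List ℤ, (∀ x ∈ l, x ≤ z x) → l.Pairwise (· < ·) →
    (l.flatMap (blockOf z)).Pairwise (fun u v => u ≤ z u → v ≤ z v → u < v) := by
  intro l
  induction l with
  | nil => intro _ _; simp
  | cons x l ih =>
    intro hmem hpw
    have hx3 : x ≤ z x := hmem x List.mem_cons_self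
    rw [List.flatMap_cons, List.pairwise_append]
    refine ⟨?_, ih (fun y hy => hmem y (List.mem_cons_of_mem _ hy)) (List.pairwise_cons.mp hpw).2, ?_⟩
    · unfold blockOf
      split_ifs with hf
      · simp
      · rw [List.pairwise_cons]
        refine ⟨?_, by simp⟩
        intro v hv
        simp only [List.mem_singleton] at hv
        rw [hv]
        intro hzx _
        exfalso
        rw [hzz x] at hzx
        have : x < z x := lt_of_le_of_ne hx3 (Ne.symm hf)
        omega
    · intro u hu v hv
      rw [List.mem_flatMap] at hv
      obtain ⟨y, hyl, hvy⟩ := hv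
      intro hu3 hv3
      have hu_eq : u = x := lo_of_mem_blockOf hn hzs hzz hx3 hu hu3
      have hv_eq : v = y := lo_of_mem_blockOf hn hzs hzz (hmem y (List.mem_cons_of_mem _ hyl)) hvy hv3
      have := (List.pairwise_cons.mp hpw).1 y hyl
      omega

/-- Hi elements are followed by their partner -/
lemma flat_chain :
    ∀ l : List ℤ, (∀ x ∈ l, x ≤ z x) →
    (l.flatMap (blockOf z)).Chain' (fun u v => z u < u → v = z u) := by
  intro l
  induction l with
  | nil => intro _; exact List.isChain_nil
  | cons x l ih =>
    intro hmem
    have hx3 : x ≤ z x := hmem x List.mem_cons_self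
    rw [List.flatMap_cons]
    show List.IsChain _ _
    rw [List.isChain_append]
    refine ⟨?_, ih (fun y hy => hmem y (List.mem_cons_of_mem _ hy)), ?_⟩
    · unfold blockOf
      split_ifs with hf
      · simp
      · rw [List.isChain_cons_cons]
        refine ⟨?_, by simp⟩
        intro _
        rw [hzz x]
    · intro u hu v _
      have hlast : u = x := by
        unfold blockOf at hu
        split_ifs at hu <;> simp_all
      intro hc
      rw [hlast] at hc
      omega

/-- the last element of the window is Lo -/
lemma flat_last :
    ∀ l : List ℤ, (∀ x ∈ l, x ≤ z x) →
    ∀ v, (l.flatMap (blockOf z)).getLast? = some v → v ≤ z v := by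
  intro l
  induction l with
  | nil => intro _ v hv; simp at hv
  | cons x l ih =>
    intro hmem v hv
    rw [List.flatMap_cons] at hv
    by_cases hl : l.flatMap (blockOf z) = []
    · rw [hl, List.append_nil] at hv
      unfold blockOf at hv
      have hx3 : x ≤ z x := hmem x List.mem_cons_self
      split_ifs at hv with hf
      · have hxv : x = v := by simpa using hv
        subst hxv
        exact hx3
      · have hxv : x = v := by
          have : [z x, x].getLast? = some x := rfl
          rw [this] at hv
          simpa using hv
        subst hxv
        exact hx3
    · rw [List.getLast?_append] at hv
      obtain ⟨w, hw⟩ := Option.isSome_iff_exists.mp (List.getLast?_isSome.mpr hl)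
      rw [hw] at hv
      have hwv : w = v := by simpa using hv
      rw [← hwv]
      exact ih (fun y hy => hmem y (List.mem_cons_of_mem _ hy)) w hw

end Zfacts

end Window

section Canon

variable {n : ℕ} {z : Equiv.Perm ℤ}

/-- canonical representative in `[1, n]` -/
def canon (n : ℕ) (v : ℤ) : ℤ := (v - 1) % (n : ℤ) + 1

lemma canon_mem (hn : 0 < n) (v : ℤ) : 1 ≤ canon n v ∧ canon n v ≤ n := by
  have hne : (n : ℤ) ≠ 0 := by exact_mod_cast hn.ne'
  have h0 : 0 ≤ (v - 1) % (n : ℤ) := Int.emod_nonneg _ hne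
  have h1 : (v - 1) % (n : ℤ) < n := Int.emod_lt_of_pos _ (by exact_mod_cast hn)
  unfold canon
  omega

lemma canon_cong (v : ℤ) : (v - canon n v) % (n : ℤ) = 0 := by
  unfold canon
  have h := Int.mul_ediv_add_emod (v - 1) (n : ℤ)
  exact Int.emod_eq_zero_of_dvd ⟨(v - 1) / n, by linarith⟩

lemma canon_eq_self (hn : 0 < n) {v : ℤ} (h1 : 1 ≤ v) (h2 : v ≤ n) : canon n v = v := by
  unfold canon
  rw [Int.emod_eq_of_lt (by omega) (by omega)]
  omega

lemma canon_inj (hn : 0 < n) {u v : ℤ} (h : canon n u = canon n v) :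
    (u - v) % (n : ℤ) = 0 := by
  obtain ⟨m1, e1⟩ := cong_ex (canon_cong (n := n) u)
  obtain ⟨m2, e2⟩ := cong_ex (canon_cong (n := n) v)
  apply cong_mk (m := m1 - m2)
  have hx : (m1 - m2) * (n : ℤ) = m1 * n - m2 * n := by ring
  linarith

lemma canon_eq_of_cong (hn : 0 < n) {u v : ℤ} (h : (u - v) % (n : ℤ) = 0) :
    canon n u = canon n v := by
  obtain ⟨m1, e1⟩ := cong_ex (canon_cong (n := n) u)
  obtain ⟨m2, e2⟩ := cong_ex (canon_cong (n := n) v)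
  obtain ⟨m, e⟩ := cong_ex h
  have hu := canon_mem hn u
  have hv := canon_mem hn v
  have hc : canon n u = canon n v + (m2 + m - m1) * (n : ℤ) := by
    have hx : (m2 + m - m1) * (n : ℤ) = m2 * n + m * n - m1 * n := by ring
    linarith
  have h0 : canon n u - canon n v = 0 :=
    small_mod hn (cong_mk hc) (by omega) (by omega)
  omega

variable (hn : 0 < n) (hzs : IsShift n ⇑z) (hzz : ∀ i : ℤ, z (z i) = i)
include hn hzs hzz

lemma flat_pairwise_res :
    ∀ l : List ℤ, (∀ x ∈ l, 1 ≤ x ∧ x ≤ (n : ℤ) ∧ x ≤ z x) → l.Pairwise (· ≠ ·) →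
    (l.flatMap (blockOf z)).Pairwise (fun u v => (u - v) % (n : ℤ) ≠ 0) := by
  intro l
  induction l with
  | nil => intro _ _; simp
  | cons x l ih =>
    intro hmem hpw
    obtain ⟨hx1, hx2, hx3⟩ := hmem x List.mem_cons_self
    rw [List.flatMap_cons, List.pairwise_append]
    refine ⟨?_, ih (fun y hy => hmem y (List.mem_cons_of_mem _ hy))
      (List.pairwise_cons.mp hpw).2, ?_⟩
    · unfold blockOf
      split_ifs with hf
      · simp
      · rw [List.pairwise_cons]
        refine ⟨?_, by simp⟩
        intro v hv
        simp only [List.mem_singleton] at hv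
        rw [hv]
        intro hc
        exact hf (zfix_of_cong hn hzs hzz hx3 hc)
    · intro u hu v hv
      rw [List.mem_flatMap] at hv
      obtain ⟨y, hyl, hvy⟩ := hv
      obtain ⟨hy1, hy2, hy3⟩ := hmem y (List.mem_cons_of_mem _ hyl)
      have hxy : x ≠ y := (List.pairwise_cons.mp hpw).1 y hyl
      rcases mem_blockOf hu with hueq | ⟨-, hueq⟩ <;>
        rcases mem_blockOf hvy with hveq | ⟨-, hveq⟩ <;> rw [hueq, hveq]
      · intro hc
        have h0 : x - y = 0 := small_mod hn hc (by omega) (by omega)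
        exact hxy (by omega)
      · intro hc
        exact hxy (cross_zx hn hzs hzz hy1 hy2 hy3 hx1 hx2 hx3 (emod_sub_sym hc)).symm
      · intro hc
        exact hxy (cross_zx hn hzs hzz hx1 hx2 hx3 hy1 hy2 hy3 hc)
      · intro hc
        exact hxy (cross_zz hn hzs hzz hx1 hx2 hy1 hy2 hc)

lemma flat_cover {l : List ℤ} (hb : ∀ x : ℤ, 1 ≤ x → x ≤ n → x ≤ z x → x ∈ l) :
    ∀ r : ℤ, 1 ≤ r → r ≤ n → ∃ v ∈ l.flatMap (blockOf z), canon n v = r := by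
  intro r hr1 hr2
  by_cases hlo : r ≤ z r
  · refine ⟨r, List.mem_flatMap.mpr ⟨r, hb r hr1 hr2 hlo, self_mem_blockOf r⟩, ?_⟩
    exact canon_eq_self hn hr1 hr2
  · push_neg at hlo
    set y := canon n (z r) with hy
    have hymem := canon_mem hn (z r)
    obtain ⟨m, hm⟩ := cong_ex (canon_cong (n := n) (z r))
    -- hm : z r = y + m * n
    have hzy : z y = r - m * n := by
      have happ : z (z r + (-m) * (n : ℤ)) = z (z r) + (-m) * n := IsShift.mul hzs (z r) (-m)
      rw [hzz] at happ
      have he : z r + (-m) * (n : ℤ) = y := by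
        have : (-m) * (n : ℤ) = -(m * n) := by ring
        omega
      rw [he] at happ
      have : (-m) * (n : ℤ) = -(m * n) := by ring
      omega
    have hylo : y < z y := by omega
    have hymem2 : z y ∈ blockOf z y := by
      unfold blockOf
      rw [if_neg (by omega)]
      exact List.mem_cons_self
    refine ⟨z y, List.mem_flatMap.mpr ⟨y, hb y hymem.1 hymem.2 (le_of_lt hylo), hymem2⟩, ?_⟩
    have hcong : (z y - r) % (n : ℤ) = 0 := cong_mk (m := -m) (by
      have : (-m) * (n : ℤ) = -(m * n) := by ring
      omega)
    rw [canon_eq_of_cong hn hcong, canon_eq_self hn hr1 hr2]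

lemma flat_length {l : List ℤ} (hmem : ∀ x ∈ l, 1 ≤ x ∧ x ≤ (n : ℤ) ∧ x ≤ z x)
    (hpw : l.Pairwise (· ≠ ·)) (hb : ∀ x : ℤ, 1 ≤ x → x ≤ n → x ≤ z x → x ∈ l) :
    (l.flatMap (blockOf z)).length = n := by
  set VL := l.flatMap (blockOf z) with hVL
  have hres := flat_pairwise_res hn hzs hzz l hmem hpw
  have hnodup : (VL.map (canon n)).Nodup := by
    rw [List.Nodup, List.pairwise_map]
    apply List.Pairwise.imp _ hres
    intro u v h hc
    exact h (canon_inj hn hc)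
  have hcard : (VL.map (canon n)).toFinset = Finset.Icc (1 : ℤ) (n : ℤ) := by
    apply Finset.Subset.antisymm
    · intro r hr
      rw [List.mem_toFinset, List.mem_map] at hr
      obtain ⟨v, _, rfl⟩ := hr
      have := canon_mem hn v
      rw [Finset.mem_Icc]
      omega
    · intro r hr
      rw [Finset.mem_Icc] at hr
      obtain ⟨v, hv, hcv⟩ := flat_cover hn hzs hzz hb r hr.1 hr.2
      rw [List.mem_toFinset, List.mem_map]
      exact ⟨v, hv, hcv⟩
  have h1 := List.toFinset_card_of_nodup hnodup
  rw [hcard, Int.card_Icc] at h1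
  have h2 : (VL.map (canon n)).length = VL.length := List.length_map _
  omega

end Canon

section Global

variable {n : ℕ} {z : Equiv.Perm ℤ} {b : ℤ → ℤ}

lemma G2_global (hn : 0 < n) (hbs : IsShift n b) (hzs : IsShift n ⇑z)
    (hlast : b (n : ℤ) ≤ z (b (n : ℤ)))
    (hchain : ∀ r : ℤ, 1 ≤ r → r < n → z (b r) < b r → b (r + 1) = z (b r)) :
    ∀ p : ℤ, z (b p) < b p → b (p + 1) = z (b p) := by
  intro p hp
  obtain ⟨r, q, hpr, hr1, hr2⟩ := window_decomp hn 0 p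
  have hbp : b p = b r + q * n := by rw [hpr]; exact IsShift.mul hbs r q
  have hzbp : z (b p) = z (b r) + q * n := by rw [hbp]; exact IsShift.mul hzs (b r) q
  have hhi : z (b r) < b r := by linarith
  by_cases hrn : r < n
  · have hb1 : b (p + 1) = b (r + 1) + q * n := by
      rw [hpr, show r + q * (n : ℤ) + 1 = (r + 1) + q * n by ring]
      exact IsShift.mul hbs (r + 1) q
    rw [hb1, hchain r (by omega) (by omega) hhi]
    omega
  · exfalso
    have hrn' : r = n := by omega
    rw [hrn'] at hhi
    linarith

lemma G1_global (hn : 0 < n) (hbs : IsShift n b) (hzs : IsShift n ⇑z)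
    (hlo : ∀ r : ℤ, 1 ≤ r → r ≤ n → b r ≤ z (b r) → 1 ≤ b r ∧ b r ≤ n)
    (hincr : ∀ r r' : ℤ, 1 ≤ r → r < r' → r' ≤ n → b r ≤ z (b r) → b r' ≤ z (b r') →
      b r < b r') :
    ∀ p q : ℤ, b p ≤ z (b p) → b q ≤ z (b q) → (p < q ↔ b p < b q) := by
  have fwd : ∀ p q : ℤ, b p ≤ z (b p) → b q ≤ z (b q) → p < q → b p < b q := by
    intro p q hp hq hpq
    obtain ⟨r, m, hpr, hr1, hr2⟩ := window_decomp hn 0 p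
    obtain ⟨r', m', hqr, hr1', hr2'⟩ := window_decomp hn 0 q
    have hbp : b p = b r + m * n := by rw [hpr]; exact IsShift.mul hbs r m
    have hbq : b q = b r' + m' * n := by rw [hqr]; exact IsShift.mul hbs r' m'
    have hzp : z (b p) = z (b r) + m * n := by rw [hbp]; exact IsShift.mul hzs (b r) m
    have hzq : z (b q) = z (b r') + m' * n := by rw [hbq]; exact IsShift.mul hzs (b r') m'
    have hlor : b r ≤ z (b r) := by linarith
    have hlor' : b r' ≤ z (b r') := by linarith
    have hbr := hlo r (by omega) (by omega) hlor
    have hbr' := hlo r' (by omega) (by omega) hlor'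
    have hmle : m ≤ m' := by
      by_contra hc
      push_neg at hc
      have h1 : 1 * (n : ℤ) ≤ (m - m') * n :=
        mul_le_mul_of_nonneg_right (by omega) (by positivity)
      have h2 : (m - m') * (n : ℤ) = m * n - m' * n := by ring
      linarith
    rcases eq_or_lt_of_le hmle with he | hlt
    · subst he
      have hrr : r < r' := by linarith
      have := hincr r r' (by omega) hrr (by omega) hlor hlor'
      linarith
    · have h1 : 1 * (n : ℤ) ≤ (m' - m) * n :=
        mul_le_mul_of_nonneg_right (by omega) (by positivity)
      have h2 : (m' - m) * (n : ℤ) = m' * n - m * n := by ring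
      linarith
  intro p q hp hq
  constructor
  · exact fwd p q hp hq
  · intro hlt
    rcases lt_trichotomy p q with h | h | h
    · exact h
    · subst h; exact absurd hlt (lt_irrefl _)
    · exact absurd (fwd q p hq hp h) (by omega)

lemma pointwiseB (hzz : ∀ i : ℤ, z (z i) = i) (hbinj : Function.Injective b)
    (hG1 : ∀ p q : ℤ, b p ≤ z (b p) → b q ≤ z (b q) → (p < q ↔ b p < b q))
    (hG2 : ∀ p : ℤ, z (b p) < b p → b (p + 1) = z (b p)) :
    ∀ p q : ℤ, b p < b q → (q < p ↔ (z (b q) < z (b p) ∧ z (b q) ≤ b p)) := by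
  intro p q hpq
  by_cases hp : b p ≤ z (b p) <;> by_cases hq : b q ≤ z (b q)
  · constructor
    · intro h
      exact absurd ((hG1 q p hq hp).mp h) (by omega)
    · rintro ⟨-, h2⟩
      omega
  · push_neg at hq
    have hq1 : b (q + 1) = z (b q) := hG2 q hq
    have hq1lo : b (q + 1) ≤ z (b (q + 1)) := by rw [hq1, hzz]; omega
    constructor
    · intro hqp
      rcases eq_or_lt_of_le (show q + 1 ≤ p by omega) with he | hlt
      · have hbe : b (q + 1) = b p := by rw [he]
        rw [hq1] at hbe
        constructor
        · have hzbp : z (b p) = b q := by rw [← hbe, hzz]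
          omega
        · omega
      · have hlt2 : b (q + 1) < b p := (hG1 (q + 1) p hq1lo hp).mp hlt
        rw [hq1] at hlt2
        exact ⟨by omega, by omega⟩
    · rintro ⟨h1, h2⟩
      rw [← hq1] at h2
      rcases eq_or_lt_of_le h2 with he | hlt
      · have hpe : q + 1 = p := hbinj he
        omega
      · have := (hG1 (q + 1) p hq1lo hp).mpr hlt
        omega
  · push_neg at hp
    have hp1 : b (p + 1) = z (b p) := hG2 p hp
    have hp1lo : b (p + 1) ≤ z (b (p + 1)) := by rw [hp1, hzz]; omega
    constructor
    · intro hqp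
      exfalso
      have hlt : b (p + 1) < b q := by rw [hp1]; omega
      have := (hG1 (p + 1) q hp1lo hq).mpr hlt
      omega
    · rintro ⟨h1, h2⟩
      exfalso
      omega
  · push_neg at hp hq
    have hp1 := hG2 p hp
    have hq1 := hG2 q hq
    have hp1lo : b (p + 1) ≤ z (b (p + 1)) := by rw [hp1, hzz]; omega
    have hq1lo : b (q + 1) ≤ z (b (q + 1)) := by rw [hq1, hzz]; omega
    have hiff : q + 1 < p + 1 ↔ b (q + 1) < b (p + 1) := hG1 (q + 1) (p + 1) hq1lo hp1lo
    constructor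
    · intro hqp
      have h1 : b (q + 1) < b (p + 1) := hiff.mp (by omega)
      rw [hp1, hq1] at h1
      exact ⟨h1, by omega⟩
    · rintro ⟨h1, h2⟩
      have hb1 : b (q + 1) < b (p + 1) := by rw [hp1, hq1]; omega
      have := hiff.mpr hb1
      omega

end Global

end AminProof

open AminProof

/-- for an affine involution `z`, the visible descents of `z` are exactly
the right descents of `α_min(z)`, and the involution code of `z` equals the code
of `α_min(z)`.  Here `a` is `α_min(z)`, characterized by the property that the window
of `a⁻¹` in positions `1, …, n` is `[[z(a₁), a₁, z(a₂), a₂, …]]`. -/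
theorem visible_descents_and_icode_of_amin (n : ℕ) (hn : 0 < n)
    (z : Equiv.Perm ℤ) (hz : IsAffine n z) (hzi : z⁻¹ = z)
    (a : Equiv.Perm ℤ) (ha : IsAffine n a)
    (hwin : ∀ k : ℕ, k < n → a⁻¹ ((k : ℤ) + 1) = (aminWindow n z).getD k 0) :
    (∀ i : ℤ, (z (i + 1) < z i ∧ z (i + 1) ≤ i) ↔
      wordLength n (a * affS n i) < wordLength n a) ∧
    (∀ i : ℤ, 1 ≤ i → i ≤ n → icodeEntry z i = codeEntry a i) := by
  classical
  have hzs : IsShift n ⇑z := hz.1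
  have has : IsShift n ⇑a := ha.1
  have hzz : ∀ i : ℤ, z (z i) = i := by
    intro i
    have h : z⁻¹ (z i) = i := Equiv.symm_apply_apply z i
    rwa [hzi] at h
  rcases Nat.lt_or_ge n 2 with hn1 | hn2
  · -- n = 1 : everything is trivial
    have hn1' : n = 1 := by omega
    subst hn1'
    have hzone : ∀ π : Equiv.Perm ℤ, IsAffine 1 π → ∀ i : ℤ, π i = i := by
      intro π hπ i
      have hs : IsShift 1 ⇑π := hπ.1
      have h1 : π 1 = 1 := by
        have h := hπ.2
        simp only [Nat.cast_one, Finset.Icc_self, Finset.sum_singleton] at h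
        exact h
      have h2 : π (1 + (i - 1) * (1 : ℕ)) = π 1 + (i - 1) * (1 : ℕ) := IsShift.mul hs 1 (i - 1)
      simp only [Nat.cast_one, mul_one] at h2
      rw [show (1 : ℤ) + (i - 1) = i by ring] at h2
      omega
    have hz1 := hzone z hz
    have ha1 := hzone a ha
    constructor
    · intro i
      constructor
      · rintro ⟨h1, -⟩
        rw [hz1, hz1] at h1
        omega
      · intro h
        exfalso
        have haff : affS 1 i = 1 := by
          rw [affS, affT, dif_pos (by simp [Int.emod_one])]
        rw [haff, mul_one] at h
        omega
    · intro i _ _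
      have he1 : icodeEntry z i = 0 := by
        rw [icodeEntry]
        have : IsEmpty {j : ℤ // i < j ∧ z j < z i ∧ z j ≤ i} :=
          ⟨fun ⟨j, hj⟩ => by rw [hz1, hz1] at hj; omega⟩
        exact Nat.card_of_isEmpty
      have he2 : codeEntry a i = 0 := by
        rw [codeEntry]
        have : IsEmpty {j : ℤ // i < j ∧ a j < a i} :=
          ⟨fun ⟨j, hj⟩ => by rw [ha1, ha1] at hj; omega⟩
        exact Nat.card_of_isEmpty
      rw [he1, he2]
  · -- main case n ≥ 2
    have hn0 : 0 < n := hn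
    set L := ((Finset.Icc (1 : ℤ) (n : ℤ)).sort (· ≤ ·)).filter (fun x => x ≤ z x) with hL
    have hLmem : ∀ x ∈ L, 1 ≤ x ∧ x ≤ (n : ℤ) ∧ x ≤ z x := by
      intro x hx
      rw [hL, List.mem_filter] at hx
      have h1 := Finset.mem_Icc.mp ((Finset.mem_sort _).mp hx.1)
      refine ⟨h1.1, h1.2, by simpa using hx.2⟩
    have hLpw : L.Pairwise (· ≠ ·) :=
      List.Nodup.filter _ ((Finset.Icc (1 : ℤ) (n : ℤ)).sort_nodup (· ≤ ·))
    have hLsorted : L.Pairwise (· < ·) :=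
      List.Pairwise.filter _ (Finset.sortedLT_sort (Finset.Icc (1 : ℤ) (n : ℤ))).pairwise
    have hLcover : ∀ x : ℤ, 1 ≤ x → x ≤ n → x ≤ z x → x ∈ L := by
      intro x h1 h2 h3
      rw [hL, List.mem_filter]
      exact ⟨(Finset.mem_sort _).mpr (Finset.mem_Icc.mpr ⟨h1, h2⟩), by simpa using h3⟩
    set V := L.flatMap (blockOf z) with hV
    have hVlen : V.length = n := flat_length hn0 hzs hzz hLmem hLpw hLcover
    have hwinV : aminWindow n z = V := by
      rw [hV, ← dedup_flat hn0 hzs hzz L hLmem hLpw]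
      rfl
    set b : ℤ → ℤ := fun v => a⁻¹ v with hb
    have hbs : IsShift n b := IsShift.inv has
    have hbinj : Function.Injective b := a⁻¹.injective
    have hbV : ∀ k : ℕ, k < n → ∀ (hk : k < V.length), b ((k : ℤ) + 1) = V[k] := by
      intro k hk hk'
      rw [hb]
      simp only
      rw [hwin k hk, hwinV, List.getD_eq_getElem _ _ hk']
    have hVmemlo : ∀ v ∈ V, v ≤ z v → 1 ≤ v ∧ v ≤ (n : ℤ) := by
      intro v hv hlov
      rw [hV, List.mem_flatMap] at hv
      obtain ⟨y, hyL, hvy⟩ := hv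
      obtain ⟨hy1, hy2, hy3⟩ := hLmem y hyL
      have := lo_of_mem_blockOf hn0 hzs hzz hy3 hvy hlov
      omega
    -- window facts in ℤ form
    have hbr : ∀ r : ℤ, 1 ≤ r → r ≤ n → ∀ (h : (r - 1).toNat < V.length), b r = V[(r - 1).toNat] := by
      intro r h1 h2 h3
      have hcast : ((( r - 1).toNat : ℤ)) + 1 = r := by omega
      conv_lhs => rw [← hcast]
      exact hbV _ (by omega) h3
    have hlo : ∀ r : ℤ, 1 ≤ r → r ≤ n → b r ≤ z (b r) → 1 ≤ b r ∧ b r ≤ n := by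
      intro r h1 h2 h3
      have hidx : (r - 1).toNat < V.length := by rw [hVlen]; omega
      rw [hbr r h1 h2 hidx] at h3 ⊢
      exact hVmemlo _ (List.getElem_mem hidx) h3
    have hincr : ∀ r r' : ℤ, 1 ≤ r → r < r' → r' ≤ n → b r ≤ z (b r) → b r' ≤ z (b r') →
        b r < b r' := by
      intro r r' h1 h2 h3 h4 h5
      have hidx : (r - 1).toNat < V.length := by rw [hVlen]; omega
      have hidx' : (r' - 1).toNat < V.length := by rw [hVlen]; omega
      have hpwV := flat_pairwise_lo hn0 hzs hzz L (fun x hx => (hLmem x hx).2.2) hLsorted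
      rw [← hV] at hpwV
      have := List.pairwise_iff_getElem.mp hpwV (r - 1).toNat (r' - 1).toNat hidx hidx'
        (by omega)
      rw [hbr r h1 (by omega) hidx] at h4 ⊢
      rw [hbr r' (by omega) h3 hidx'] at h5 ⊢
      exact this h4 h5
    have hchain : ∀ r : ℤ, 1 ≤ r → r < n → z (b r) < b r → b (r + 1) = z (b r) := by
      intro r h1 h2 h3
      have hidx : (r - 1).toNat < V.length := by rw [hVlen]; omega
      have hidx' : (r - 1).toNat + 1 < V.length := by rw [hVlen]; omega
      have hchV := flat_chain hn0 hzs hzz L (fun x hx => (hLmem x hx).2.2)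
      rw [← hV] at hchV
      have hc := List.isChain_iff_getElem.mp hchV (r - 1).toNat (by omega)
      have hbr1 : b (r + 1) = V[(r - 1).toNat + 1] := by
        have hcast : ((((r - 1).toNat + 1 : ℕ)) : ℤ) + 1 = r + 1 := by push_cast; omega
        rw [← hcast]
        exact hbV _ (by omega) hidx'
      rw [hbr r h1 (by omega) hidx] at h3 ⊢
      rw [hbr1]
      exact hc h3
    have hlast : b (n : ℤ) ≤ z (b (n : ℤ)) := by
      have hidx : ((n : ℤ) - 1).toNat < V.length := by rw [hVlen]; omega
      rw [hbr (n : ℤ) (by omega) le_rfl hidx]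
      apply flat_last hn0 hzs hzz L (fun x hx => (hLmem x hx).2.2)
      rw [← hV, List.getLast?_eq_getElem?]
      have : V.length - 1 = ((n : ℤ) - 1).toNat := by omega
      rw [this]
      exact List.getElem?_eq_getElem hidx
    have hG1 := G1_global hn0 hbs hzs hlo hincr
    have hG2 := G2_global hn0 hbs hzs hlast hchain
    have hpwB := pointwiseB hzz hbinj hG1 hG2
    have hpoint : ∀ i j : ℤ, i < j → (a j < a i ↔ (z j < z i ∧ z j ≤ i)) := by
      intro i j hij
      have h1 : b (a i) = i := (Equiv.symm_apply_apply a i : a⁻¹ (a i) = i)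
      have h2 : b (a j) = j := (Equiv.symm_apply_apply a j : a⁻¹ (a j) = j)
      have h := hpwB (a i) (a j) (by rw [h1, h2]; exact hij)
      rw [h1, h2] at h
      exact h
    constructor
    · intro i
      have h1 := hpoint i (i + 1) (by omega)
      have h2 := length_lt_iff hn2 ha i
      rw [h2, h1]
    · intro i _ _
      rw [icodeEntry, codeEntry]
      apply Nat.card_congr
      apply Equiv.subtypeEquivRight
      intro j
      constructor
      · rintro ⟨hij, h1, h2⟩
        exact ⟨hij, (hpoint i j hij).mpr ⟨h1, h2⟩⟩
      · rintro ⟨hij, h⟩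
        have h2 := (hpoint i j hij).mp h
        exact ⟨hij, h2.1, h2.2⟩
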